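/- The backward-induction online optimum satisfies OPT_1 ≥ (1/2)·E[max_t v_t] for independent nonnegative integrable v_1,...,v_n, where OPT_{n+1}=0 and OPT_t = E[max(v_t, OPT_{t+1})]. -/

import Mathlib

open MeasureTheory ProbabilityTheory


private def algB (a b : ℕ → ℝ) (n : ℕ) : ℕ → ℝ
  | 0 => 0
  | (k+1) => a (n - k) + b (n - k) * algB a b n k

private lemma algB_lower (a b c : ℕ → ℝ) (τ : ℝ) (n : ℕ)
    (hc : ∀ t, 0 ≤ c t) (hb0 : ∀ t, 0 ≤ b t) (hb1 : ∀ t, b t ≤ 1)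
    (ha : ∀ t, a t = c t + τ * (1 - b t)) :
    ∀ k, τ * (1 - ∏ i ∈ Finset.range k, b (n - i))
        + (∏ i ∈ Finset.range k, b (n - i)) * (∑ i ∈ Finset.range k, c (n - i))
        ≤ algB a b n k := by
  intro k
  induction k with
  | zero => simp [algB]
  | succ k ih =>
    have hQ0 : 0 ≤ ∏ i ∈ Finset.range k, b (n - i) :=
      Finset.prod_nonneg fun i _ => hb0 _
    have hQ1 : (∏ i ∈ Finset.range k, b (n - i)) ≤ 1 :=
      Finset.prod_le_one (fun i _ => hb0 _) (fun i _ => hb1 _)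
    have hmul := mul_le_mul_of_nonneg_left ih (hb0 (n - k))
    have hQb : (∏ i ∈ Finset.range k, b (n - i)) * b (n - k) ≤ 1 :=
      (mul_le_of_le_one_right hQ0 (hb1 _)).trans hQ1
    have hc' : 0 ≤ c (n - k) * (1 - (∏ i ∈ Finset.range k, b (n - i)) * b (n - k)) :=
      mul_nonneg (hc _) (by linarith)
    simp only [algB, Finset.prod_range_succ, Finset.sum_range_succ, ha (n - k)]
    nlinarith [hmul, hc']

/-- the backward-induction online optimum satisfies
`OPT 1 ≥ (1/2) · E[max_t v t]`. -/
theorem opt_ge_half_prophet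
    {Ω : Type*} [MeasureSpace Ω] [IsProbabilityMeasure (ℙ : Measure Ω)]
    (n : ℕ) (v : ℕ → Ω → ℝ)
    (hmeas : ∀ i, Measurable (v i))
    (hnn : ∀ i ω, 0 ≤ v i ω)
    (hint : ∀ i, Integrable (v i))
    (hindep : iIndepFun v ℙ)
    (OPT : ℕ → ℝ)
    (hOPTlast : OPT (n + 1) = 0)
    (hOPTrec : ∀ t ∈ Finset.Icc 1 n, OPT t = ∫ ω, max (v t ω) (OPT (t + 1))) :
    OPT 1 ≥ (1 / 2) * ∫ ω, ⨆ i ∈ Finset.Icc 1 n, v i ω := by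
  classical
  rcases Nat.eq_zero_or_pos n with hn | hn
  · subst hn
    have h0 : ∀ ω : Ω, (⨆ i ∈ Finset.Icc 1 0, v i ω) = 0 := by
      intro ω
      simp [Real.iSup_of_isEmpty]
    simp only [h0, integral_zero, mul_zero, ge_iff_le]
    rw [show (1 : ℕ) = 0 + 1 from rfl, hOPTlast]
  · have hne : (Finset.Icc 1 n).Nonempty := ⟨1, by simp [Finset.mem_Icc]; omega⟩
    set M : Ω → ℝ := fun ω => (Finset.Icc 1 n).sup' hne (fun i => v i ω) with hM
    have hMnn : ∀ ω, 0 ≤ M ω := fun ω =>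
      (hnn 1 ω).trans (Finset.le_sup' (fun i => v i ω) (Finset.mem_Icc.mpr ⟨le_rfl, hn⟩))
    have hMle : ∀ ω, M ω ≤ ∑ i ∈ Finset.Icc 1 n, v i ω := by
      intro ω
      obtain ⟨j, hj, hMj⟩ := Finset.exists_mem_eq_sup' hne (fun i => v i ω)
      show ((Finset.Icc 1 n).sup' hne fun i => v i ω) ≤ _
      rw [hMj]
      exact Finset.single_le_sum (fun i _ => hnn i ω) hj
    have hMmeas : Measurable M := by
      have h1 := Finset.measurable_sup' hne (fun i (_ : i ∈ Finset.Icc 1 n) => hmeas i)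
      have h2 : (Finset.Icc 1 n).sup' hne v = M := by
        funext ω; rw [Finset.sup'_apply]
      rwa [h2] at h1
    have hMint : Integrable M := by
      have hsum : Integrable (fun ω => ∑ i ∈ Finset.Icc 1 n, v i ω) :=
        integrable_finset_sum _ (fun i _ => hint i)
      refine hsum.mono hMmeas.aestronglyMeasurable (ae_of_all _ fun ω => ?_)
      rw [Real.norm_eq_abs, Real.norm_eq_abs, abs_of_nonneg (hMnn ω),
        abs_of_nonneg (Finset.sum_nonneg fun i _ => hnn i ω)]
      exact hMle ω
    -- identify the iSup with M
    have hcong : ∀ ω, (⨆ i ∈ Finset.Icc 1 n, v i ω) = M ω := by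
      intro ω
      have hub : ∀ i : ℕ, (⨆ _ : i ∈ Finset.Icc 1 n, v i ω) ≤ M ω := by
        intro i
        by_cases hi : i ∈ Finset.Icc 1 n
        · rw [ciSup_pos hi]
          exact Finset.le_sup' (fun i => v i ω) hi
        · rw [show (⨆ _ : i ∈ Finset.Icc 1 n, v i ω) = 0 from
            @Real.iSup_of_isEmpty _ ⟨fun h => hi h⟩ _]
          exact hMnn ω
      refine le_antisymm (Real.iSup_le hub (hMnn ω)) ?_
      refine Finset.sup'_le _ _ fun j hj => ?_
      have : (⨆ _ : j ∈ Finset.Icc 1 n, v j ω) ≤ ⨆ i, ⨆ _ : i ∈ Finset.Icc 1 n, v i ω :=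
        le_ciSup ⟨M ω, Set.forall_mem_range.mpr hub⟩ j
      rwa [ciSup_pos hj] at this
    -- threshold and basic quantities
    set τ : ℝ := (1/2) * ∫ ω, M ω with hτ
    have hτ0 : 0 ≤ τ := mul_nonneg (by norm_num) (integral_nonneg hMnn)
    set A : ℕ → Set Ω := fun t => {ω | τ < v t ω} with hA
    have hAmeas : ∀ t, MeasurableSet (A t) :=
      fun t => measurableSet_lt measurable_const (hmeas t)
    set a : ℕ → ℝ := fun t => ∫ ω, (A t).indicator (v t) ω with ha
    set b : ℕ → ℝ := fun t => 1 - (ℙ (A t)).toReal with hb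
    set c : ℕ → ℝ := fun t => ∫ ω, max (v t ω - τ) 0 with hc
    have hble : ∀ t, (ℙ (A t)).toReal ≤ 1 := by
      intro t
      have h1 : ℙ (A t) ≤ 1 := prob_le_one
      have h2 := ENNReal.toReal_mono (by norm_num) h1
      simpa using h2
    have hb0 : ∀ t, 0 ≤ b t := by
      intro t; simp only [hb]; linarith [hble t]
    have hb1 : ∀ t, b t ≤ 1 := by
      intro t; simp only [hb]; linarith [ENNReal.toReal_nonneg (a := ℙ (A t))]
    have hc0 : ∀ t, 0 ≤ c t := by
      intro t; simp only [hc]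
      exact integral_nonneg (fun ω => le_max_right _ _)
    have hPosInt : ∀ t, Integrable (fun ω => max (v t ω - τ) 0) := fun t =>
      ((hint t).sub (integrable_const τ)).pos_part
    have hIndInt : ∀ t, Integrable ((A t).indicator (v t)) := fun t =>
      (hint t).indicator (hAmeas t)
    have hcompl : ∀ t : ℕ, (ℙ ((A t)ᶜ)).toReal = b t := by
      intro t
      rw [measure_compl (hAmeas t) (measure_ne_top _ _), measure_univ,
          ENNReal.toReal_sub_of_le prob_le_one (by norm_num), hb]
      simp
    have hsplit : ∀ (t : ℕ) (C : ℝ),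
        (∫ ω, ((A t).indicator (v t) ω + (A t)ᶜ.indicator (fun _ => C) ω)) = a t + b t * C := by
      intro t C
      rw [integral_add (hIndInt t) ((integrable_const C).indicator (hAmeas t).compl),
          integral_indicator_const C (hAmeas t).compl, measureReal_def, hcompl t, smul_eq_mul, ha]
    have ha_eq : ∀ t, a t = c t + τ * (1 - b t) := by
      intro t
      have hpt : ((A t).indicator (v t)) =
          fun ω => max (v t ω - τ) 0 + (A t).indicator (fun _ => τ) ω := by
        funext ω
        by_cases h : ω ∈ A t
        · rw [Set.indicator_of_mem h, Set.indicator_of_mem h]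
          have hτv : τ < v t ω := by simpa [hA, Set.mem_setOf_eq] using h
          rw [max_eq_left (by linarith)]; ring
        · rw [Set.indicator_of_notMem h, Set.indicator_of_notMem h]
          have hτv : ¬ τ < v t ω := by simpa [hA, Set.mem_setOf_eq] using h
          rw [max_eq_right (by linarith [not_lt.mp hτv])]; ring
      simp only [ha, hpt]
      rw [integral_add (hPosInt t) ((integrable_const τ).indicator (hAmeas t)),
          integral_indicator_const τ (hAmeas t), smul_eq_mul, measureReal_def, hb]
      simp only [hc]
      ring
    -- OPT dominates algB along the backward induction
    have key : ∀ k, k ≤ n → algB a b n k ≤ OPT (n + 1 - k) := by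
      intro k
      induction k with
      | zero => intro _; simp [algB, hOPTlast]
      | succ k ih =>
        intro hk
        have hIH := ih (by omega)
        have htmem : n - k ∈ Finset.Icc 1 n := Finset.mem_Icc.mpr (by omega)
        have hidx : n + 1 - (k + 1) = n - k := by omega
        have hidx2 : n - k + 1 = n + 1 - k := by omega
        rw [hidx, hOPTrec _ htmem, hidx2]
        have hmaxint : Integrable (fun ω => max (v (n - k) ω) (OPT (n + 1 - k))) := by
          have := (hint (n - k)).sup (integrable_const (OPT (n + 1 - k)))
          exact this
        calc algB a b n (k + 1) = a (n - k) + b (n - k) * algB a b n k := by simp [algB]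
          _ ≤ a (n - k) + b (n - k) * OPT (n + 1 - k) := by
              have := mul_le_mul_of_nonneg_left hIH (hb0 (n - k)); linarith
          _ = ∫ ω, ((A (n - k)).indicator (v (n - k)) ω
                + (A (n - k))ᶜ.indicator (fun _ => OPT (n + 1 - k)) ω) :=
              (hsplit (n - k) _).symm
          _ ≤ ∫ ω, max (v (n - k) ω) (OPT (n + 1 - k)) := by
              refine integral_mono
                ((hIndInt (n - k)).add ((integrable_const _).indicator (hAmeas (n - k)).compl))
                hmaxint (fun ω => ?_)
              by_cases h : ω ∈ A (n - k)
              · rw [Set.indicator_of_mem h, Set.indicator_of_notMem (by simpa using h)]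
                simpa using le_max_left _ (OPT (n + 1 - k))
              · rw [Set.indicator_of_notMem h, Set.indicator_of_mem (by simpa using h)]
                simpa using le_max_right (v (n - k) ω) _
    have hOPT1 : algB a b n n ≤ OPT 1 := by
      have := key n le_rfl
      simpa using this
    -- lower bound on the sum of the c's
    have hSge : τ ≤ ∑ i ∈ Finset.range n, c (n - i) := by
      have hsum_eq : (∑ i ∈ Finset.range n, c (n - i))
          = ∫ ω, ∑ i ∈ Finset.range n, max (v (n - i) ω - τ) 0 := by
        rw [integral_finset_sum _ (fun i _ => hPosInt (n - i))]
      have hpt : ∀ ω, M ω - τ ≤ ∑ i ∈ Finset.range n, max (v (n - i) ω - τ) 0 := by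
        intro ω
        obtain ⟨j, hj, hMj⟩ := Finset.exists_mem_eq_sup' hne (fun i => v i ω)
        obtain ⟨hj1, hj2⟩ := Finset.mem_Icc.mp hj
        have hjmem : n - j ∈ Finset.range n := Finset.mem_range.mpr (by omega)
        have hsingle := Finset.single_le_sum
          (f := fun i => max (v (n - i) ω - τ) 0) (fun i _ => le_max_right _ _) hjmem
        have hsingle' : max (v j ω - τ) 0 ≤ ∑ i ∈ Finset.range n, max (v (n - i) ω - τ) 0 := by
          simpa [show n - (n - j) = j by omega] using hsingle
        have hMω : M ω = v j ω := hMj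
        calc M ω - τ = v j ω - τ := by rw [hMω]
          _ ≤ max (v j ω - τ) 0 := le_max_left _ _
          _ ≤ _ := hsingle'
      have hint1 : Integrable (fun ω => M ω - τ) := hMint.sub (integrable_const τ)
      have hint2 : Integrable (fun ω => ∑ i ∈ Finset.range n, max (v (n - i) ω - τ) 0) :=
        integrable_finset_sum _ (fun i _ => hPosInt (n - i))
      have hmono := integral_mono hint1 hint2 hpt
      rw [integral_sub hMint (integrable_const τ), integral_const, smul_eq_mul,
          measureReal_def, measure_univ] at hmono
      rw [hsum_eq]
      simp only [ENNReal.toReal_one, one_mul] at hmono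
      rw [hτ] at *
      linarith [hmono]
    have hQ0 : 0 ≤ ∏ i ∈ Finset.range n, b (n - i) :=
      Finset.prod_nonneg fun i _ => hb0 _
    have hQ1 : (∏ i ∈ Finset.range n, b (n - i)) ≤ 1 :=
      Finset.prod_le_one (fun i _ => hb0 _) (fun i _ => hb1 _)
    have hlow := algB_lower a b c τ n hc0 hb0 hb1 ha_eq n
    have hfinal : τ ≤ algB a b n n := by
      have h1 := mul_le_mul_of_nonneg_left hSge hQ0
      nlinarith [hlow, h1]
    have hintcong : (∫ ω, ⨆ i ∈ Finset.Icc 1 n, v i ω) = ∫ ω, M ω := by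
      exact integral_congr_ae (ae_of_all _ hcong)
    rw [ge_iff_le, hintcong, ← hτ]
    exact hfinal.trans hOPT1
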